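/- Let F be a free group and let K be a subgroup of F such that for all g, h ∈ K there exist non-zero integers p and q with gᵖhq = hqgᵖ (i.e., gᵖ and hq commute). Then K is cyclic. -/

import Mathlib

open FreeGroup

lemma reduce_eq_self_of_true {α : Type*} [DecidableEq α] :
    ∀ (L : List (α × Bool)), (∀ x ∈ L, x.2 = true) → FreeGroup.reduce L = L := by
  intro L hL
  induction L with
  | nil => rfl
  | cons x L ih =>
    have hx : x.2 = true := hL x (by simp)
    have hL' : ∀ y ∈ L, y.2 = true := fun y hy => hL y (List.mem_cons_of_mem _ hy)
    rw [FreeGroup.reduce.cons, ih hL']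
    cases L with
    | nil => simp
    | cons y L' =>
      have hy : y.2 = true := hL' y (by simp)
      simp only []
      split
      · rename_i h
        rw [hx, hy] at h
        simp at h
      · rfl

lemma not_commute_pow {α : Type*} [DecidableEq α] {a b : α} (hab : a ≠ b)
    {m n : ℕ} (hm : m ≠ 0) (hn : n ≠ 0) :
    ¬ Commute ((FreeGroup.of a) ^ m) ((FreeGroup.of b) ^ n) := by
  intro hc
  have h1 : ((FreeGroup.of a) ^ m * (FreeGroup.of b) ^ n).toWord
      = List.replicate m (a, true) ++ List.replicate n (b, true) := by
    conv_lhs => rw [← FreeGroup.mk_toWord (x := (FreeGroup.of a) ^ m),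
      ← FreeGroup.mk_toWord (x := (FreeGroup.of b) ^ n)]
    rw [FreeGroup.mul_mk, FreeGroup.toWord_mk, FreeGroup.toWord_of_pow,
      FreeGroup.toWord_of_pow]
    apply reduce_eq_self_of_true
    intro x hx
    rcases List.mem_append.1 hx with h | h <;>
      simpa using (List.eq_of_mem_replicate h) ▸ rfl
  have h2 : ((FreeGroup.of b) ^ n * (FreeGroup.of a) ^ m).toWord
      = List.replicate n (b, true) ++ List.replicate m (a, true) := by
    conv_lhs => rw [← FreeGroup.mk_toWord (x := (FreeGroup.of b) ^ n),
      ← FreeGroup.mk_toWord (x := (FreeGroup.of a) ^ m)]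
    rw [FreeGroup.mul_mk, FreeGroup.toWord_mk, FreeGroup.toWord_of_pow,
      FreeGroup.toWord_of_pow]
    apply reduce_eq_self_of_true
    intro x hx
    rcases List.mem_append.1 hx with h | h <;>
      simpa using (List.eq_of_mem_replicate h) ▸ rfl
  have := hc
  rw [Commute, SemiconjBy] at this
  rw [← FreeGroup.toWord_inj, h1, h2] at this
  obtain ⟨m, rfl⟩ := Nat.exists_eq_succ_of_ne_zero hm
  obtain ⟨n, rfl⟩ := Nat.exists_eq_succ_of_ne_zero hn
  simp [List.replicate_succ] at this
  exact hab this.1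

lemma not_commute_zpow {α : Type*} [DecidableEq α] {a b : α} (hab : a ≠ b)
    {p q : ℤ} (hp : p ≠ 0) (hq : q ≠ 0) :
    ¬ Commute ((FreeGroup.of a) ^ p) ((FreeGroup.of b) ^ q) := by
  intro hc
  have key : Commute ((FreeGroup.of a) ^ p.natAbs) ((FreeGroup.of b) ^ q.natAbs) := by
    rcases Int.natAbs_eq p with hp' | hp' <;> rcases Int.natAbs_eq q with hq' | hq'
    · rw [hp', hq', zpow_natCast, zpow_natCast] at hc; exact hc
    · rw [hp', hq', zpow_neg, zpow_natCast, zpow_natCast] at hc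
      simpa using hc.inv_right
    · rw [hp', hq', zpow_neg, zpow_natCast, zpow_natCast] at hc
      simpa using hc.inv_left
    · rw [hp', hq', zpow_neg, zpow_neg, zpow_natCast, zpow_natCast] at hc
      simpa using hc.inv_left.inv_right
  exact not_commute_pow hab (Int.natAbs_ne_zero.2 hp) (Int.natAbs_ne_zero.2 hq) key

lemma freeGroup_cyclic_of_subsingleton {α : Type*} [Subsingleton α] :
    IsCyclic (FreeGroup α) := by
  rcases isEmpty_or_nonempty α with h | h
  · infer_instance
  · obtain ⟨a⟩ := h
    have key : ∀ x : FreeGroup α, x ∈ Subgroup.zpowers (FreeGroup.of a) := by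
      intro x
      induction x using FreeGroup.induction_on with
    | C1 => exact one_mem _
    | of x => exact (Subsingleton.elim a x) ▸ Subgroup.mem_zpowers _
    | inv_of x hx => exact inv_mem hx
    | mul x y hx hy => exact mul_mem hx hy
    exact ⟨⟨FreeGroup.of a, fun x => Subgroup.mem_zpowers_iff.1 (key x)⟩⟩

/-- If `K` is a subgroup of a free group such that any two elements of `K` have non-trivial
commuting powers, then `K` is cyclic. -/
theorem subgroup_of_free_group_with_commuting_powers_is_cyclic
    (F : Type*) [Group F] [IsFreeGroup F] (K : Subgroup F)
    (h : ∀ g ∈ K, ∀ k ∈ K, ∃ p q : ℤ, p ≠ 0 ∧ q ≠ 0 ∧ g ^ p * k ^ q = k ^ q * g ^ p) :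
    IsCyclic K := by
  classical
  -- K is a free group by Nielsen–Schreier
  let S := IsFreeGroup.Generators K
  let e : K ≃* FreeGroup S := IsFreeGroup.toFreeGroup K
  -- the generator type must be a subsingleton
  have hS : Subsingleton S := by
    by_contra hs
    rw [not_subsingleton_iff_nontrivial] at hs
    obtain ⟨a, b, hab⟩ := hs
    set g : K := e.symm (FreeGroup.of a)
    set k : K := e.symm (FreeGroup.of b)
    obtain ⟨p, q, hp, hq, hcomm⟩ := h (g : F) g.2 (k : F) k.2
    have hcomm' : (g : F) ^ p * (k : F) ^ q = (k : F) ^ q * (g : F) ^ p := hcomm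
    have hK : g ^ p * k ^ q = k ^ q * g ^ p := by
      ext
      push_cast
      exact hcomm'
    have : Commute ((FreeGroup.of a) ^ p) ((FreeGroup.of b) ^ q) := by
      have := congrArg e hK
      simpa [Commute, SemiconjBy, map_mul, map_zpow, g, k] using this
    exact not_commute_zpow hab hp hq this
  have : IsCyclic (FreeGroup S) := freeGroup_cyclic_of_subsingleton
  exact isCyclic_of_surjective e.symm e.symm.surjective
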